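/- Let Z₀ and Z₁ be random vectors taking values in [−M, M]^m for some M > 0, with distributions P₀ and P₁ respectively. Then for every multi-index r ∈ ℕ₀^m, |E(Z₀^r) − E(Z₁^r)| ≤ e^{(m−1)|r|₁} · sup over a ∈ ℝ^m with ‖a‖_∞ ≤ 1 of |E((aᵀZ₀)^{|r|₁}) − E((aᵀZ₁)^{|r|₁})|, where Z^r = Z₁^{r₁}⋯Z_m^{r_m} and |r|₁ = r₁ + ⋯ + r_m. -/

import Mathlib

open MeasureTheory Finset

lemma sign_pow_sum (e : ℕ) :
    ∑ b : Bool, (if b then (1:ℝ) else -1) ^ e = if Even e then 2 else 0 := by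
  rcases Nat.even_or_odd e with h | h
  · rw [if_pos h]
    simp [Fintype.sum_bool, h.neg_one_pow]
  · rw [if_neg (Nat.not_even_iff_odd.2 h)]
    simp [Fintype.sum_bool, h.neg_one_pow]

lemma polar {ι : Type*} [Fintype ι] [DecidableEq ι] (x : ι → ℝ) :
    ∑ ε : ι → Bool, (∏ j, (if ε j then (1:ℝ) else -1)) *
        (∑ j, (if ε j then (1:ℝ) else -1) * x j) ^ (Fintype.card ι)
      = 2 ^ (Fintype.card ι) * (Nat.factorial (Fintype.card ι)) * ∏ j, x j := by
  set n := Fintype.card ι with hn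
  have expand : ∀ ε : ι → Bool,
      (∑ j, (if ε j then (1:ℝ) else -1) * x j) ^ n
        = ∑ k ∈ piAntidiag (univ : Finset ι) n,
            (Nat.multinomial univ k : ℝ) *
              ((∏ j, (if ε j then (1:ℝ) else -1) ^ k j) * ∏ j, x j ^ k j) := by
    intro ε
    rw [Finset.sum_pow_eq_sum_piAntidiag]
    refine Finset.sum_congr rfl fun k _ => ?_
    rw [← Finset.prod_mul_distrib]
    simp_rw [mul_pow]
  calc ∑ ε : ι → Bool, (∏ j, (if ε j then (1:ℝ) else -1)) *
        (∑ j, (if ε j then (1:ℝ) else -1) * x j) ^ n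
      = ∑ k ∈ piAntidiag (univ : Finset ι) n, ∑ ε : ι → Bool,
          ((Nat.multinomial univ k : ℝ) * (∏ j, x j ^ k j)) *
            ∏ j, (if ε j then (1:ℝ) else -1) ^ (k j + 1) := by
        simp_rw [expand, Finset.mul_sum]
        rw [Finset.sum_comm]
        refine Finset.sum_congr rfl fun k _ => Finset.sum_congr rfl fun ε _ => ?_
        simp_rw [pow_succ, Finset.prod_mul_distrib]
        ring
    _ = ∑ k ∈ piAntidiag (univ : Finset ι) n,
          ((Nat.multinomial univ k : ℝ) * (∏ j, x j ^ k j)) *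
            ∏ j, (if Even (k j + 1) then (2:ℝ) else 0) := by
        refine Finset.sum_congr rfl fun k _ => ?_
        rw [← Finset.mul_sum]
        have h2 : ∑ ε : ι → Bool, ∏ j, (if ε j then (1:ℝ) else -1) ^ (k j + 1)
            = ∏ j, ∑ b : Bool, (if b then (1:ℝ) else -1) ^ (k j + 1) :=
          (Fintype.prod_sum fun j (b : Bool) =>
            (if b = true then (1:ℝ) else -1) ^ (k j + 1)).symm
        rw [h2]
        exact congrArg _ (Finset.prod_congr rfl fun j _ => sign_pow_sum _)
    _ = 2 ^ n * (Nat.factorial n) * ∏ j, x j := by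
        rw [Finset.sum_eq_single (fun _ => 1)]
        · have h1 : Nat.multinomial (univ : Finset ι) (fun _ => 1) = Nat.factorial n := by
            have := Nat.multinomial_spec (univ : Finset ι) (fun _ => (1:ℕ))
            simpa [hn] using this
          simp [h1]
          ring
        · intro k hk hne
          rw [mem_piAntidiag] at hk
          have hev : ∃ j, Even (k j) := by
            by_contra hodd
            push_neg at hodd
            have hall : ∀ j, k j = 1 := by
              by_contra hne1
              push_neg at hne1
              obtain ⟨j0, hj0⟩ := hne1
              have h1 : ∀ j ∈ (univ : Finset ι), 1 ≤ k j := fun j _ => by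
                have := Nat.odd_iff.1 (Nat.not_even_iff_odd.1 (hodd j))
                omega
              have hlt : (1:ℕ) < k j0 := by
                have := Nat.odd_iff.1 (Nat.not_even_iff_odd.1 (hodd j0))
                omega
              have hfin : n < n := by
                calc n = ∑ _j : ι, (1:ℕ) := by simp [hn]
                  _ < ∑ j, k j := Finset.sum_lt_sum h1 ⟨j0, Finset.mem_univ j0, hlt⟩
                  _ = n := hk.1
              exact absurd hfin (lt_irrefl n)
            exact hne (funext hall)
          obtain ⟨j, hj⟩ := hev
          have hz0 : (if Even (k j + 1) then (2:ℝ) else 0) = 0 := by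
            rw [if_neg]
            simp [Nat.even_add_one, hj]
          have hz : ∏ j', (if Even (k j' + 1) then (2:ℝ) else 0) = 0 :=
            Finset.prod_eq_zero (Finset.mem_univ j) hz0
          rw [hz, mul_zero]
        · intro h
          exact absurd (by simp [mem_piAntidiag, hn, Finset.card_univ]) h

/-- key pointwise identity -/
lemma key_id {m : ℕ} (r : Fin m → ℕ) (hn : (∑ i, r i) ≠ 0) (z : Fin m → ℝ) :
    ∏ i, z i ^ r i
      = ∑ ε : (Σ i : Fin m, Fin (r i)) → Bool,
          ((∏ j, (if ε j then (1:ℝ) else -1)) * ((∑ i, r i : ℕ) : ℝ) ^ (∑ i, r i) /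
              (2 ^ (∑ i, r i) * (Nat.factorial (∑ i, r i) : ℝ))) *
            (∑ i, ((∑ k : Fin (r i), (if ε ⟨i, k⟩ then (1:ℝ) else -1)) / ((∑ i, r i : ℕ) : ℝ))
                * z i) ^ (∑ i, r i) := by
  have hcard : Fintype.card (Σ i : Fin m, Fin (r i)) = ∑ i, r i := by
    simp [Fintype.card_sigma]
  have hprod : ∏ j : Σ i : Fin m, Fin (r i), z j.1 = ∏ i, z i ^ r i := by
    rw [← Finset.univ_sigma_univ, Finset.prod_sigma]
    simp
  have hp := polar (ι := Σ i : Fin m, Fin (r i)) (fun j => z j.1)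
  rw [hcard, hprod] at hp
  have hn' : ((∑ i, r i : ℕ) : ℝ) ≠ 0 := Nat.cast_ne_zero.2 hn
  have cancel : ∀ c w : ℝ, c * w = ((∑ i, r i : ℕ) : ℝ) * (c / ((∑ i, r i : ℕ) : ℝ) * w) := by
    intro c w
    rw [← mul_assoc, mul_div_cancel₀ _ hn']
  have hsum : ∀ ε : (Σ i : Fin m, Fin (r i)) → Bool,
      (∑ j : Σ i : Fin m, Fin (r i), (if ε j then (1:ℝ) else -1) * z j.1)
        = ((∑ i, r i : ℕ) : ℝ) *
            ∑ i, ((∑ k : Fin (r i), (if ε ⟨i, k⟩ then (1:ℝ) else -1)) / ((∑ i, r i : ℕ) : ℝ))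
              * z i := by
    intro ε
    rw [← Finset.univ_sigma_univ, Finset.sum_sigma, Finset.mul_sum]
    refine Finset.sum_congr rfl fun i _ => ?_
    calc ∑ s : Fin (r i), (if ε ⟨i, s⟩ then (1:ℝ) else -1) * z (⟨i, s⟩ : Σ i : Fin m, Fin (r i)).fst
        = (∑ k : Fin (r i), (if ε ⟨i, k⟩ then (1:ℝ) else -1)) * z i := by
          rw [Finset.sum_mul]
      _ = _ := cancel _ _
  have hD : ((2:ℝ) ^ (∑ i, r i) * (Nat.factorial (∑ i, r i) : ℝ)) ≠ 0 := by
    positivity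
  have h3 : ∏ i, z i ^ r i
      = (∑ ε : (Σ i : Fin m, Fin (r i)) → Bool, (∏ j, (if ε j then (1:ℝ) else -1)) *
          (∑ j : Σ i : Fin m, Fin (r i), (if ε j then (1:ℝ) else -1) * z j.1) ^ (∑ i, r i)) /
        ((2:ℝ) ^ (∑ i, r i) * (Nat.factorial (∑ i, r i) : ℝ)) := by
    rw [hp]
    field_simp
  rw [h3, Finset.sum_div]
  refine Finset.sum_congr rfl fun ε _ => ?_
  rw [hsum ε, mul_pow]
  ring

/-- integrability and integral bound from a pointwise bound on the box -/
lemma aux_int {m : ℕ} {M : ℝ} (P : Measure (Fin m → ℝ)) [IsProbabilityMeasure P]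
    (h : P {z | ∀ i, z i ∈ Set.Icc (-M) M}ᶜ = 0) {f : (Fin m → ℝ) → ℝ} (hf : Continuous f)
    {C : ℝ} (hC : ∀ z : Fin m → ℝ, (∀ i, |z i| ≤ M) → |f z| ≤ C) :
    Integrable f P ∧ |∫ z, f z ∂P| ≤ C := by
  have hae : ∀ᵐ z ∂P, ∀ i, |z i| ≤ M := by
    rw [ae_iff]
    rw [← h]
    congr 1
    rw [← Set.compl_setOf]
    congr 1
    ext z
    simp [abs_le]
  have hbound : ∀ᵐ z ∂P, ‖f z‖ ≤ C := hae.mono fun z hz => by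
    rw [Real.norm_eq_abs]; exact hC z hz
  have hint : Integrable f P :=
    (integrable_const C).mono' hf.aestronglyMeasurable hbound
  refine ⟨hint, ?_⟩
  have := norm_integral_le_of_norm_le_const (μ := P) hbound
  simpa [Real.norm_eq_abs] using this

/-- for random vectors `Z₀ ~ P₀`, `Z₁ ~ P₁` taking values in `[-M,M]^m`,
and any multi-index `r`,
`|E(Z₀^r) - E(Z₁^r)| ≤ e^{(m-1)|r|₁} · sup_{‖a‖_∞ ≤ 1} |E((aᵀZ₀)^{|r|₁}) - E((aᵀZ₁)^{|r|₁})|`. -/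
theorem moment_diff_le_projection_sup {m : ℕ} (M : ℝ) (hM : 0 < M)
    (P₀ P₁ : Measure (Fin m → ℝ))
    [IsProbabilityMeasure P₀] [IsProbabilityMeasure P₁]
    (h₀ : P₀ {z | ∀ i, z i ∈ Set.Icc (-M) M}ᶜ = 0)
    (h₁ : P₁ {z | ∀ i, z i ∈ Set.Icc (-M) M}ᶜ = 0)
    (r : Fin m → ℕ) :
    |(∫ z, ∏ i, z i ^ r i ∂P₀) - ∫ z, ∏ i, z i ^ r i ∂P₁| ≤
      Real.exp (((m : ℝ) - 1) * ((∑ i, r i : ℕ) : ℝ)) *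
        ⨆ a : {a : Fin m → ℝ // ∀ i, |a i| ≤ 1},
          |(∫ z, (∑ i, a.1 i * z i) ^ (∑ i, r i) ∂P₀) -
            ∫ z, (∑ i, a.1 i * z i) ^ (∑ i, r i) ∂P₁| := by
  classical
  have hcont_proj : ∀ a : Fin m → ℝ,
      Continuous fun z : Fin m → ℝ => (∑ i, a i * z i) ^ (∑ i, r i) :=
    fun a => (continuous_finset_sum _ fun i _ =>
      (continuous_const.mul (continuous_apply i))).pow _
  -- integrability of projections
  have hint_proj : ∀ (P : Measure (Fin m → ℝ)) [IsProbabilityMeasure P],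
      P {z | ∀ i, z i ∈ Set.Icc (-M) M}ᶜ = 0 → ∀ a : Fin m → ℝ,
      Integrable (fun z => (∑ i, a i * z i) ^ (∑ i, r i)) P := by
    intro P _ hP a
    refine (aux_int P hP (hcont_proj a) (C := (∑ i, |a i| * M) ^ (∑ i, r i)) ?_).1
    intro z hz
    rw [abs_pow]
    refine pow_le_pow_left₀ (abs_nonneg _) ?_ _
    refine (Finset.abs_sum_le_sum_abs _ _).trans (Finset.sum_le_sum fun i _ => ?_)
    rw [abs_mul]
    exact mul_le_mul_of_nonneg_left (hz i) (abs_nonneg _)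
  -- integral bound for projections with small directions
  have hbd_proj : ∀ (P : Measure (Fin m → ℝ)) [IsProbabilityMeasure P],
      P {z | ∀ i, z i ∈ Set.Icc (-M) M}ᶜ = 0 →
      ∀ a : {a : Fin m → ℝ // ∀ i, |a i| ≤ 1},
      |∫ z, (∑ i, a.1 i * z i) ^ (∑ i, r i) ∂P| ≤ ((m : ℝ) * M) ^ (∑ i, r i) := by
    intro P _ hP a
    refine (aux_int P hP (hcont_proj a.1) ?_).2
    intro z hz
    rw [abs_pow]
    refine pow_le_pow_left₀ (abs_nonneg _) ?_ _
    calc |∑ i, a.1 i * z i| ≤ ∑ i, |a.1 i * z i| := Finset.abs_sum_le_sum_abs _ _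
      _ ≤ ∑ _i : Fin m, M := Finset.sum_le_sum fun i _ => by
          rw [abs_mul]
          calc |a.1 i| * |z i| ≤ 1 * M :=
            mul_le_mul (a.2 i) (hz i) (abs_nonneg _) one_pos.le
            _ = M := one_mul M
      _ = (m : ℝ) * M := by
          rw [Finset.sum_const, Finset.card_univ, Fintype.card_fin, nsmul_eq_mul]
  have hbddF : BddAbove (Set.range fun a : {a : Fin m → ℝ // ∀ i, |a i| ≤ 1} =>
      |(∫ z, (∑ i, a.1 i * z i) ^ (∑ i, r i) ∂P₀) -
        ∫ z, (∑ i, a.1 i * z i) ^ (∑ i, r i) ∂P₁|) := by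
    refine ⟨2 * ((m : ℝ) * M) ^ (∑ i, r i), ?_⟩
    rintro _ ⟨a, rfl⟩
    calc |(∫ z, (∑ i, a.1 i * z i) ^ (∑ i, r i) ∂P₀) -
          ∫ z, (∑ i, a.1 i * z i) ^ (∑ i, r i) ∂P₁|
        ≤ |∫ z, (∑ i, a.1 i * z i) ^ (∑ i, r i) ∂P₀| +
          |∫ z, (∑ i, a.1 i * z i) ^ (∑ i, r i) ∂P₁| := abs_sub _ _
      _ ≤ ((m : ℝ) * M) ^ (∑ i, r i) + ((m : ℝ) * M) ^ (∑ i, r i) :=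
          add_le_add (hbd_proj P₀ h₀ a) (hbd_proj P₁ h₁ a)
      _ = 2 * ((m : ℝ) * M) ^ (∑ i, r i) := by ring
  have hFle : ∀ a : {a : Fin m → ℝ // ∀ i, |a i| ≤ 1},
      |(∫ z, (∑ i, a.1 i * z i) ^ (∑ i, r i) ∂P₀) -
        ∫ z, (∑ i, a.1 i * z i) ^ (∑ i, r i) ∂P₁| ≤
      ⨆ a : {a : Fin m → ℝ // ∀ i, |a i| ≤ 1},
        |(∫ z, (∑ i, a.1 i * z i) ^ (∑ i, r i) ∂P₀) -
          ∫ z, (∑ i, a.1 i * z i) ^ (∑ i, r i) ∂P₁| :=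
    fun a => le_ciSup hbddF a
  have hS0 : 0 ≤ ⨆ a : {a : Fin m → ℝ // ∀ i, |a i| ≤ 1},
      |(∫ z, (∑ i, a.1 i * z i) ^ (∑ i, r i) ∂P₀) -
        ∫ z, (∑ i, a.1 i * z i) ^ (∑ i, r i) ∂P₁| :=
    le_trans (abs_nonneg _) (hFle ⟨fun _ => 0, fun i => by norm_num⟩)
  rcases Nat.eq_zero_or_pos (∑ i, r i) with hn0 | hnpos
  · -- all exponents zero
    have hri : ∀ i, r i = 0 := by
      intro i
      have := Finset.sum_eq_zero_iff.1 hn0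
      exact this i (Finset.mem_univ i)
    have hone : (fun z : Fin m → ℝ => ∏ i, z i ^ r i) = fun _ => (1:ℝ) := by
      funext z; simp [hri]
    rw [hone]
    simp only [integral_const, measure_univ, probReal_univ, ENNReal.toReal_one, smul_eq_mul, one_mul,
      sub_self, abs_zero]
    exact mul_nonneg (Real.exp_pos _).le hS0
  · rcases le_or_gt m 1 with hm | hm
    · -- m = 1
      have hm0 : m ≠ 0 := by
        rintro rfl
        simp at hnpos
      have hm1 : m = 1 := by omega
      subst hm1
      have hid : (fun z : Fin 1 → ℝ => ∏ i, z i ^ r i) =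
          fun z : Fin 1 → ℝ => (∑ i, (fun _ : Fin 1 => (1:ℝ)) i * z i) ^ (∑ i, r i) := by
        funext z
        simp [Fin.prod_univ_one, Fin.sum_univ_one]
      rw [hid]
      have : Real.exp (((1:ℕ) - 1 : ℝ) * ((∑ i : Fin 1, r i : ℕ) : ℝ)) = 1 := by
        norm_num
      rw [this, one_mul]
      exact hFle ⟨fun _ => (1:ℝ), fun i => by norm_num⟩
    · -- main case : m ≥ 2, n ≥ 1
      have hne : (∑ i, r i) ≠ 0 := hnpos.ne'
      have hn' : ((∑ i, r i : ℕ) : ℝ) ≠ 0 := Nat.cast_ne_zero.2 hne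
      have haa : ∀ (ε : (Σ i : Fin m, Fin (r i)) → Bool) (i : Fin m),
          |(∑ k : Fin (r i), (if ε ⟨i, k⟩ then (1:ℝ) else -1)) / ((∑ i, r i : ℕ) : ℝ)| ≤ 1 := by
        intro ε i
        rw [abs_div, abs_of_nonneg (by positivity : (0:ℝ) ≤ ((∑ i, r i : ℕ) : ℝ)),
          div_le_one (by exact_mod_cast hnpos)]
        calc |∑ k : Fin (r i), (if ε ⟨i, k⟩ then (1:ℝ) else -1)|
            ≤ ∑ k : Fin (r i), |if ε ⟨i, k⟩ then (1:ℝ) else -1| :=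
              Finset.abs_sum_le_sum_abs _ _
          _ = ∑ _k : Fin (r i), (1:ℝ) := by
              refine Finset.sum_congr rfl fun k _ => ?_
              split <;> norm_num
          _ = (r i : ℝ) := by simp
          _ ≤ ((∑ i, r i : ℕ) : ℝ) := by
              exact_mod_cast Finset.single_le_sum
                (f := r) (fun j _ => Nat.zero_le _) (Finset.mem_univ i)
      have hexp : ∀ (P : Measure (Fin m → ℝ)) [IsProbabilityMeasure P],
          P {z | ∀ i, z i ∈ Set.Icc (-M) M}ᶜ = 0 →
          ∫ z, ∏ i, z i ^ r i ∂P
            = ∑ ε : (Σ i : Fin m, Fin (r i)) → Bool,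
                ((∏ j, (if ε j then (1:ℝ) else -1)) * ((∑ i, r i : ℕ) : ℝ) ^ (∑ i, r i) /
                    (2 ^ (∑ i, r i) * (Nat.factorial (∑ i, r i) : ℝ))) *
                  ∫ z, (∑ i, ((∑ k : Fin (r i), (if ε ⟨i, k⟩ then (1:ℝ) else -1)) /
                      ((∑ i, r i : ℕ) : ℝ)) * z i) ^ (∑ i, r i) ∂P := by
        intro P _ hP
        rw [integral_congr_ae (Filter.Eventually.of_forall fun z => key_id r hne z)]
        rw [integral_finset_sum _ fun ε _ => ((hint_proj P hP _).const_mul _)]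
        exact Finset.sum_congr rfl fun ε _ => integral_const_mul _ _
      rw [hexp P₀ h₀, hexp P₁ h₁, ← Finset.sum_sub_distrib]
      simp_rw [← mul_sub]
      have habs : ∀ ε : (Σ i : Fin m, Fin (r i)) → Bool,
          |(∏ j, (if ε j then (1:ℝ) else -1)) * ((∑ i, r i : ℕ) : ℝ) ^ (∑ i, r i) /
              (2 ^ (∑ i, r i) * (Nat.factorial (∑ i, r i) : ℝ))|
            = ((∑ i, r i : ℕ) : ℝ) ^ (∑ i, r i) /
                (2 ^ (∑ i, r i) * (Nat.factorial (∑ i, r i) : ℝ)) := by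
        intro ε
        rw [abs_div, abs_mul]
        have h1 : |∏ j, (if ε j then (1:ℝ) else -1)| = 1 := by
          rw [Finset.abs_prod]
          exact Finset.prod_eq_one fun j _ => by split <;> norm_num
        rw [h1, one_mul, abs_of_nonneg (by positivity : (0:ℝ) ≤ ((∑ i, r i : ℕ) : ℝ) ^ (∑ i, r i)),
          abs_of_nonneg (by positivity : (0:ℝ) ≤ (2:ℝ) ^ (∑ i, r i) * (Nat.factorial (∑ i, r i) : ℝ))]
      have hcard2 : Fintype.card ((Σ i : Fin m, Fin (r i)) → Bool) = 2 ^ (∑ i, r i) := by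
        rw [Fintype.card_fun]
        simp [Fintype.card_sigma]
      calc |∑ ε : (Σ i : Fin m, Fin (r i)) → Bool,
              ((∏ j, (if ε j then (1:ℝ) else -1)) * ((∑ i, r i : ℕ) : ℝ) ^ (∑ i, r i) /
                  (2 ^ (∑ i, r i) * (Nat.factorial (∑ i, r i) : ℝ))) *
                ((∫ z, (∑ i, ((∑ k : Fin (r i), (if ε ⟨i, k⟩ then (1:ℝ) else -1)) /
                      ((∑ i, r i : ℕ) : ℝ)) * z i) ^ (∑ i, r i) ∂P₀) -
                  ∫ z, (∑ i, ((∑ k : Fin (r i), (if ε ⟨i, k⟩ then (1:ℝ) else -1)) /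
                      ((∑ i, r i : ℕ) : ℝ)) * z i) ^ (∑ i, r i) ∂P₁)|
          ≤ ∑ ε : (Σ i : Fin m, Fin (r i)) → Bool,
              |((∏ j, (if ε j then (1:ℝ) else -1)) * ((∑ i, r i : ℕ) : ℝ) ^ (∑ i, r i) /
                  (2 ^ (∑ i, r i) * (Nat.factorial (∑ i, r i) : ℝ))) *
                ((∫ z, (∑ i, ((∑ k : Fin (r i), (if ε ⟨i, k⟩ then (1:ℝ) else -1)) /
                      ((∑ i, r i : ℕ) : ℝ)) * z i) ^ (∑ i, r i) ∂P₀) -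
                  ∫ z, (∑ i, ((∑ k : Fin (r i), (if ε ⟨i, k⟩ then (1:ℝ) else -1)) /
                      ((∑ i, r i : ℕ) : ℝ)) * z i) ^ (∑ i, r i) ∂P₁)| :=
            Finset.abs_sum_le_sum_abs _ _
        _ ≤ ∑ _ε : (Σ i : Fin m, Fin (r i)) → Bool,
              (((∑ i, r i : ℕ) : ℝ) ^ (∑ i, r i) /
                (2 ^ (∑ i, r i) * (Nat.factorial (∑ i, r i) : ℝ))) *
              ⨆ a : {a : Fin m → ℝ // ∀ i, |a i| ≤ 1},
                |(∫ z, (∑ i, a.1 i * z i) ^ (∑ i, r i) ∂P₀) -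
                  ∫ z, (∑ i, a.1 i * z i) ^ (∑ i, r i) ∂P₁| := by
            refine Finset.sum_le_sum fun ε _ => ?_
            rw [abs_mul, habs ε]
            exact mul_le_mul_of_nonneg_left (hFle ⟨_, haa ε⟩) (by positivity)
        _ = (((∑ i, r i : ℕ) : ℝ) ^ (∑ i, r i) / (Nat.factorial (∑ i, r i) : ℝ)) *
              ⨆ a : {a : Fin m → ℝ // ∀ i, |a i| ≤ 1},
                |(∫ z, (∑ i, a.1 i * z i) ^ (∑ i, r i) ∂P₀) -
                  ∫ z, (∑ i, a.1 i * z i) ^ (∑ i, r i) ∂P₁| := by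
            rw [Finset.sum_const, Finset.card_univ, hcard2, nsmul_eq_mul, Nat.cast_pow]
            have h2 : ((2:ℕ):ℝ) = (2:ℝ) := by norm_num
            rw [h2, ← mul_assoc]
            congr 1
            have hfac : ((Nat.factorial (∑ i, r i) : ℝ)) ≠ 0 := by positivity
            field_simp
        _ ≤ Real.exp (((m : ℝ) - 1) * ((∑ i, r i : ℕ) : ℝ)) *
              ⨆ a : {a : Fin m → ℝ // ∀ i, |a i| ≤ 1},
                |(∫ z, (∑ i, a.1 i * z i) ^ (∑ i, r i) ∂P₀) -
                  ∫ z, (∑ i, a.1 i * z i) ^ (∑ i, r i) ∂P₁| := by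
            refine mul_le_mul_of_nonneg_right ?_ hS0
            have h1 : ((∑ i, r i : ℕ) : ℝ) ^ (∑ i, r i) / (Nat.factorial (∑ i, r i) : ℝ)
                ≤ Real.exp ((∑ i, r i : ℕ) : ℝ) := by
              have h2 := Real.sum_le_exp_of_nonneg
                (x := ((∑ i, r i : ℕ) : ℝ)) (Nat.cast_nonneg _) ((∑ i, r i) + 1)
              refine le_trans ?_ h2
              exact Finset.single_le_sum
                (f := fun k => ((∑ i, r i : ℕ) : ℝ) ^ k / (Nat.factorial k : ℝ))
                (fun k _ => by positivity) (Finset.mem_range.2 (Nat.lt_succ_self _))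
            refine h1.trans (Real.exp_le_exp.2 ?_)
            have hm2 : (2:ℝ) ≤ (m:ℝ) := by exact_mod_cast hm
            have hnn : (0:ℝ) ≤ ((∑ i, r i : ℕ) : ℝ) := Nat.cast_nonneg _
            nlinarith
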